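/- arXiv:2104.13310 — 2 statements merged into one kernel-verified Lean document; each statement's English description precedes it below -/
import Mathlib

section
/- Let p be a prime, let g be a unit of ZMod p that generates the group of units (ZMod p)ˣ, let q be a prime with q ∣ p - 1, let r be a natural number with q ∣ r, and let γ be a unit of ZMod p such that g ^ r = γ ^ q. Then there exists a natural number k < q such that g ^ (r / q + k * ((p - 1) / q)) = γ. -/
theorem traceback_step {p : ℕ} [Fact p.Prime] (g : (ZMod p)ˣ)
    (hg : ∀ x : (ZMod p)ˣ, x ∈ Subgroup.zpowers g)
    {q : ℕ} (hq : q.Prime) (hqp : q ∣ p - 1)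
    {r : ℕ} (hr : q ∣ r) (γ : (ZMod p)ˣ) (h : g ^ r = γ ^ q) :
    ∃ k : ℕ, k < q ∧ g ^ (r / q + k * ((p - 1) / q)) = γ := by
  set s : ℕ := (p - 1) / q with hs
  have hqs : q * s = p - 1 := Nat.mul_div_cancel' hqp
  have hord : orderOf g = p - 1 := by
    rw [orderOf_eq_card_of_forall_mem_zpowers hg, Nat.card_eq_fintype_card, ZMod.card_units]
  obtain ⟨m, hm⟩ := (Submonoid.mem_powers_iff γ g).mp
    (mem_powers_iff_mem_zpowers.mpr (hg γ))
  have hmod : r ≡ m * q [MOD p - 1] := by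
    rw [← hord, ← pow_eq_pow_iff_modEq, h, ← hm, ← pow_mul]
  have hq0 : 0 < q := hq.pos
  have hmodZ : ((q : ℤ) * s) ∣ (m : ℤ) * q - r := by
    have h2 := hmod.dvd
    rw [← hqs] at h2
    exact_mod_cast h2
  have hrq : (q : ℤ) * ((r / q : ℕ) : ℤ) = (r : ℤ) := by
    exact_mod_cast congrArg (Nat.cast : ℕ → ℤ) (Nat.mul_div_cancel' hr)
  have hsdvd : (s : ℤ) ∣ (m : ℤ) - ((r / q : ℕ) : ℤ) := by
    obtain ⟨c, hc⟩ := hmodZ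
    refine ⟨c, ?_⟩
    refine mul_left_cancel₀ (a := (q : ℤ)) (by exact_mod_cast hq0.ne') ?_
    rw [mul_sub, hrq]
    linarith [hc]
  obtain ⟨t, ht⟩ := hsdvd
  refine ⟨(t % q).toNat, ?_, ?_⟩
  · have : t % q < q := Int.emod_lt_of_pos _ (by exact_mod_cast hq0)
    omega
  · have hk : (((t % q).toNat : ℤ)) = t % q :=
      Int.toNat_of_nonneg (Int.emod_nonneg _ (by exact_mod_cast hq0.ne'))
    have hu : t % q = t - q * (t / q) := by rw [Int.emod_def]
    have key : ((r / q + (t % q).toNat * s : ℕ) : ℤ) - m = (q * s) * (-(t / q)) := by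
      rw [Nat.cast_add, Nat.cast_mul, hk, hu]
      linear_combination -ht
    have hgoal : ((r / q + (t % q).toNat * s : ℕ) : ℤ) ≡ (m : ℤ) [ZMOD ((p - 1 : ℕ) : ℤ)] := by
      rw [← hqs]
      push_cast
      exact (Int.ModEq.symm (Int.modEq_iff_dvd.mpr ⟨-(t / q), by push_cast at key ⊢; linarith [key]⟩))
    have hzp : g ^ (((r / q + (t % q).toNat * s : ℕ) : ℤ)) = g ^ ((m : ℕ) : ℤ) :=
      zpow_eq_zpow_iff_modEq.mpr (by rw [hord]; exact hgoal)
    rw [zpow_natCast, zpow_natCast] at hzp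
    rw [hzp, hm]
end

section
/- Let p be a prime, let g be a unit of ZMod p that generates the group of units (ZMod p)ˣ, let q be a prime with q ∣ p - 1, let r be a natural number with q ∣ r, and let γ be a unit of ZMod p such that g ^ r = γ ^ q. Then there exists a unique natural number k < q such that g ^ (r / q + k * ((p - 1) / q)) = γ. -/
theorem traceback_step_unique {p : ℕ} [Fact p.Prime] (g : (ZMod p)ˣ)
    (hg : ∀ x : (ZMod p)ˣ, x ∈ Subgroup.zpowers g)
    {q : ℕ} (hq : q.Prime) (hqp : q ∣ p - 1)
    {r : ℕ} (hr : q ∣ r) (γ : (ZMod p)ˣ) (h : g ^ r = γ ^ q) :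
    ∃! k : ℕ, k < q ∧ g ^ (r / q + k * ((p - 1) / q)) = γ := by
  have hp : p.Prime := Fact.out
  have hn : orderOf g = p - 1 := by
    rw [orderOf_eq_card_of_forall_mem_zpowers hg, Nat.card_eq_fintype_card,
      ZMod.card_units_eq_totient, Nat.totient_prime hp]
  set n := p - 1 with hndef
  have hnpos : 0 < n := by
    have := hp.two_le; omega
  have hqpos : 0 < q := hq.pos
  set s := n / q with hsdef
  have hns : n = q * s := (Nat.div_mul_cancel hqp).symm.trans (Nat.mul_comm _ _)
  have hspos : 0 < s := Nat.div_pos (Nat.le_of_dvd hnpos hqp) hqpos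
  have hords : orderOf (g ^ s) = q := by
    rw [orderOf_pow, hn]
    have hsn : Nat.gcd n s = s := Nat.gcd_eq_right ⟨q, by rw [hns]; ring⟩
    rw [hsn, hns, Nat.mul_div_cancel _ hspos]
  set y := γ * (g ^ (r / q))⁻¹ with hy
  have hyq : y ^ q = 1 := by
    rw [hy, mul_pow, inv_pow, ← pow_mul, Nat.div_mul_cancel hr, h, mul_inv_cancel]
  obtain ⟨a, ha⟩ := Subgroup.mem_zpowers_iff.mp (hg y)
  have haq : g ^ (a * (q : ℤ)) = 1 := by
    rw [zpow_mul, ha, zpow_natCast, hyq]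
  have hdvd : (s : ℤ) ∣ a := by
    have h1 : ((orderOf g : ℤ)) ∣ a * q := orderOf_dvd_iff_zpow_eq_one.mpr haq
    rw [hn, hns] at h1
    push_cast at h1
    rw [mul_comm a (q:ℤ)] at h1
    exact (mul_dvd_mul_iff_left (by exact_mod_cast hqpos.ne' : (q:ℤ) ≠ 0)).mp h1
  obtain ⟨b, hb⟩ := hdvd
  have hyb : (g ^ s) ^ b = y := by
    rw [← zpow_natCast g s, ← zpow_mul, ← hb, ha]
  set k := (b % (q : ℤ)).toNat with hk
  have hkq : k < q := by
    have h1 : b % (q : ℤ) < q := Int.emod_lt_of_pos b (by exact_mod_cast hqpos)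
    have h2 : 0 ≤ b % (q : ℤ) := Int.emod_nonneg b (by exact_mod_cast hqpos.ne')
    omega
  have hyk : (g ^ s) ^ k = y := by
    have : ((k : ℤ)) = b % (q : ℤ) := by
      rw [hk]; exact Int.toNat_of_nonneg (Int.emod_nonneg b (by exact_mod_cast hqpos.ne'))
    calc (g ^ s) ^ k = (g ^ s) ^ ((k : ℤ)) := (zpow_natCast _ _).symm
      _ = (g ^ s) ^ (b % (orderOf (g ^ s) : ℤ)) := by rw [this, hords]
      _ = (g ^ s) ^ b := zpow_mod_orderOf _ _
      _ = y := hyb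
  have key : ∀ m : ℕ, g ^ (r / q + m * s) = g ^ (r / q) * (g ^ s) ^ m := by
    intro m
    rw [pow_add, pow_mul']
  refine ⟨k, ⟨hkq, ?_⟩, ?_⟩
  · rw [key, hyk, hy, mul_comm γ, ← mul_assoc, mul_inv_cancel, one_mul]
  · rintro k' ⟨hk'q, hk'⟩
    have heq : (g ^ s) ^ k' = (g ^ s) ^ k := by
      have h1 : g ^ (r / q + k' * s) = g ^ (r / q + k * s) := by
        rw [hk']
        rw [key, hyk, hy, mul_comm γ, ← mul_assoc, mul_inv_cancel, one_mul]
      rw [key, key] at h1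
      exact mul_left_cancel h1
    have := (pow_eq_pow_iff_modEq.mp heq)
    rw [hords] at this
    have := this.eq_of_lt_of_lt hk'q hkq
    exact this
end
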